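/- For every natural number h there exists an integer ν = ν(h) with the following property: for every torsion-free abelian group A of rank h, every automorphism t of A, and every a ∈ A, if t^k(a) = a for some integer k ≥ 1, then t^m(a) = a for some integer m with 1 ≤ m ≤ ν. In other words, all finite orbits of elements of A under the cyclic group generated by t have length at most ν. -/

import Mathlib

open scoped TensorProduct

open Polynomial

private lemma aux_dvd_of_totient_le {H e : ℕ} (he : 0 < e) (hφ : e.totient ≤ H) :
    e ∣ (Nat.factorial (H + 1)) ^ (H + 1) := by
  have hν : ((Nat.factorial (H + 1)) ^ (H + 1)) ≠ 0 :=
    pow_ne_zero _ (Nat.factorial_ne_zero _)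
  rw [← Nat.factorization_le_iff_dvd he.ne' hν]
  intro p
  by_cases hp : p.Prime
  · set j := e.factorization p with hj
    have hpj : p ^ j ∣ e := Nat.ordProj_dvd e p
    rcases Nat.eq_zero_or_pos j with hj0 | hjpos
    · simp [hj0]
    · have htot : (p ^ j).totient ≤ H :=
        le_trans (Nat.le_of_dvd (Nat.totient_pos.2 he) (Nat.totient_dvd_of_dvd hpj)) hφ
      rw [Nat.totient_prime_pow hp hjpos] at htot
      have hp1 : p - 1 ≤ H :=
        le_trans (Nat.le_mul_of_pos_left (p - 1) (pow_pos hp.pos (j - 1))) htot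
      have hp2 := hp.two_le
      have hpH : p ≤ H + 1 := by omega
      have hpow : p ^ (j - 1) ≤ H :=
        le_trans (Nat.le_mul_of_pos_right _ (by omega)) htot
      have h2pow : 2 ^ (j - 1) ≤ H :=
        le_trans (Nat.pow_le_pow_left hp.two_le _) hpow
      have hjH : j ≤ H + 1 := by
        have := Nat.lt_two_pow_self (n := j - 1)
        omega
      have hdvd : p ^ j ∣ (Nat.factorial (H + 1)) ^ (H + 1) := by
        calc p ^ j ∣ p ^ (H + 1) := pow_dvd_pow p hjH
        _ ∣ (Nat.factorial (H + 1)) ^ (H + 1) :=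
          pow_dvd_pow_of_dvd (Nat.dvd_factorial hp.pos hpH) _
      exact (Nat.Prime.pow_dvd_iff_le_factorization hp hν).1 hdvd
  · simp [Nat.factorization_eq_zero_of_not_prime e hp]

private lemma multiset_prod_dvd_pow {α : Type*} [CommMonoid α] (s : Multiset α) (P : α)
    (h : ∀ x ∈ s, x ∣ P) : s.prod ∣ P ^ Multiset.card s := by
  induction s using Multiset.induction with
  | empty => simp
  | cons a s ih =>
    rw [Multiset.prod_cons, Multiset.card_cons, pow_succ']
    exact mul_dvd_mul (h a (Multiset.mem_cons_self a s))
      (ih fun x hx => h x (Multiset.mem_cons_of_mem hx))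

private lemma poly_dvd_X_pow_sub_one {q : ℚ[X]} {k H : ℕ} (hk : 0 < k)
    (hdvd : q ∣ X ^ k - 1) (hdeg : q.natDegree ≤ H) :
    q ∣ X ^ ((Nat.factorial (H + 1)) ^ (H + 1)) - 1 := by
  classical
  have hXk : (X ^ k - 1 : ℚ[X]) ≠ 0 := by
    simpa using (Polynomial.monic_X_pow_sub_C (1 : ℚ) hk.ne').ne_zero
  have hq0 : q ≠ 0 := by
    rintro rfl
    exact hXk (zero_dvd_iff.1 hdvd)
  have hsep : (X ^ k - 1 : ℚ[X]).Separable :=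
    Polynomial.X_pow_sub_one_separable_iff.2 (by exact_mod_cast hk.ne')
  have hsf : Squarefree q := (hsep.squarefree).squarefree_of_dvd hdvd
  have key : ∀ π ∈ UniqueFactorizationMonoid.normalizedFactors q,
      π ∣ (X : ℚ[X]) ^ ((Nat.factorial (H + 1)) ^ (H + 1)) - 1 := by
    intro π hπ
    have hprime : Prime π := UniqueFactorizationMonoid.prime_of_normalized_factor π hπ
    have hπq : π ∣ q := UniqueFactorizationMonoid.dvd_of_mem_normalizedFactors hπ
    have hπX : π ∣ ∏ e ∈ k.divisors, cyclotomic e ℚ := by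
      rw [Polynomial.prod_cyclotomic_eq_X_pow_sub_one hk]
      exact hπq.trans hdvd
    obtain ⟨e, he, hπe⟩ := hprime.exists_mem_finset_dvd hπX
    have hepos : 0 < e := Nat.pos_of_mem_divisors he
    have hirr : Irreducible (cyclotomic e ℚ) := cyclotomic.irreducible_rat hepos
    have hassoc : Associated π (cyclotomic e ℚ) :=
      hprime.irreducible.associated_of_dvd hirr hπe
    have hΦq : cyclotomic e ℚ ∣ q := hassoc.symm.dvd.trans hπq
    have hΦdeg : (cyclotomic e ℚ).natDegree ≤ H :=
      le_trans (Polynomial.natDegree_le_of_dvd hΦq hq0) hdeg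
    have htot : e.totient ≤ H := by rwa [natDegree_cyclotomic] at hΦdeg
    obtain ⟨c, hc⟩ := aux_dvd_of_totient_le hepos htot
    have hXe : (X : ℚ[X]) ^ e - 1 ∣ (X : ℚ[X]) ^ (e * c) - 1 := by
      simpa [← pow_mul] using sub_dvd_pow_sub_pow ((X : ℚ[X]) ^ e) 1 c
    refine hπe.trans ((Polynomial.cyclotomic.dvd_X_pow_sub_one e ℚ).trans ?_)
    rw [hc]
    exact hXe
  have hprod := multiset_prod_dvd_pow _ _ key
  have hassoc := UniqueFactorizationMonoid.prod_normalizedFactors hq0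
  exact hsf.isRadical _ _ (hassoc.symm.dvd.trans hprod)

private lemma end_pow_eq_one {V : Type} [AddCommGroup V] [Module ℚ V]
    [FiniteDimensional ℚ V] {H : ℕ} (hH : Module.finrank ℚ V ≤ H)
    (g : V →ₗ[ℚ] V) {k : ℕ} (hk : 0 < k) (hgk : g ^ k = 1) :
    g ^ ((Nat.factorial (H + 1)) ^ (H + 1)) = 1 := by
  have haev : Polynomial.aeval g ((X : ℚ[X]) ^ k - 1) = 0 := by
    rw [map_sub, map_pow, aeval_X, map_one, hgk, sub_self]
  have hmin : minpoly ℚ g ∣ (X : ℚ[X]) ^ k - 1 := minpoly.dvd ℚ g haev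
  have hdeg : (minpoly ℚ g).natDegree ≤ H := by
    refine le_trans (Polynomial.natDegree_le_of_dvd g.minpoly_dvd_charpoly
      g.charpoly_monic.ne_zero) ?_
    rw [g.charpoly_natDegree]
    exact hH
  obtain ⟨c, hc⟩ := poly_dvd_X_pow_sub_one hk hmin hdeg
  have haev2 : Polynomial.aeval g
      ((X : ℚ[X]) ^ ((Nat.factorial (H + 1)) ^ (H + 1)) - 1) = 0 := by
    rw [hc, map_mul, minpoly.aeval, zero_mul]
  rw [map_sub, map_pow, aeval_X, map_one, sub_eq_zero] at haev2
  exact haev2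

/-- For every natural number `h` there exists an integer `ν = ν(h)` with the
following property: for every torsion-free abelian group `A` of rank `h`, every automorphism
`t` of `A`, and every `a ∈ A`, if `t^k(a) = a` for some integer `k ≥ 1`, then `t^m(a) = a`
for some integer `m` with `1 ≤ m ≤ ν`. -/
theorem stmt_4 (h : ℕ) :
    ∃ ν : ℕ, 1 ≤ ν ∧
      ∀ (A : Type) [AddCommGroup A], (∀ g : A, g ≠ 0 → ¬IsOfFinAddOrder g) →
        ∀ (_ : FiniteDimensional ℚ (ℚ ⊗[ℤ] A)),
          Module.finrank ℚ (ℚ ⊗[ℤ] A) = h →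
          ∀ (t : AddAut A) (a : A) (k : ℕ), 1 ≤ k → (k • t) a = a →
            ∃ m : ℕ, 1 ≤ m ∧ m ≤ ν ∧ (m • t) a = a := by
  classical
  set ν := (Nat.factorial (h + 1)) ^ (h + 1) with hν
  have hν1 : 1 ≤ ν := Nat.one_le_iff_ne_zero.2 (pow_ne_zero _ (Nat.factorial_ne_zero _))
  refine ⟨ν, hν1, ?_⟩
  intro A _ htf _ hrank t a k hk hka
  refine ⟨ν, hν1, le_refl _, ?_⟩
  haveI : NoZeroSMulDivisors ℤ A := by
    haveI : IsAddTorsionFree A := isAddTorsionFree_iff_not_isOfFinAddOrder.2 (fun g hg => htf g hg)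
    infer_instance
  let τ : A →ₗ[ℤ] A := (AddEquiv.toAddMonoidHom (t : A ≃+ A)).toIntLinearMap
  let f : (ℚ ⊗[ℤ] A) →ₗ[ℚ] (ℚ ⊗[ℤ] A) := LinearMap.baseChange ℚ τ
  have key : ∀ (n : ℕ) (x : A), (f ^ n) ((1 : ℚ) ⊗ₜ[ℤ] x) = (1 : ℚ) ⊗ₜ[ℤ] ((n • t) x) := by
    intro n
    induction n with
    | zero => intro x; simp
    | succ n ih =>
      intro x
      have hf1 : ∀ y : A, f ((1 : ℚ) ⊗ₜ[ℤ] y) = (1 : ℚ) ⊗ₜ[ℤ] (t y) := fun y => by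
        simp [f, τ]
      rw [pow_succ', Module.End.mul_apply, ih x, hf1 ((n • t) x)]
      congr 1
      rw [succ_nsmul']
      rfl
  set v : ℚ ⊗[ℤ] A := (1 : ℚ) ⊗ₜ[ℤ] a with hv
  set O : Set (ℚ ⊗[ℤ] A) := Set.range (fun n : ℕ => (f ^ n) v) with hO
  set W : Submodule ℚ (ℚ ⊗[ℤ] A) := Submodule.span ℚ O with hW
  have hWf : ∀ x ∈ W, f x ∈ W := by
    intro x hx
    induction hx using Submodule.span_induction with
    | mem y hy =>
      obtain ⟨n, rfl⟩ := hy
      refine Submodule.subset_span ⟨n + 1, ?_⟩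
      show (f ^ (n + 1)) v = f ((f ^ n) v)
      rw [pow_succ', Module.End.mul_apply]
    | zero => simp
    | add y z _ _ hy hz => rw [map_add]; exact W.add_mem hy hz
    | smul c y _ hy => rw [map_smul]; exact W.smul_mem c hy
  have hvW : v ∈ W := Submodule.subset_span ⟨0, by simp⟩
  have hfkv : (f ^ k) v = v := by
    rw [key k a, hka, hv]
  have hfk : ∀ x ∈ W, (f ^ k) x = x := by
    intro x hx
    induction hx using Submodule.span_induction with
    | mem y hy =>
      obtain ⟨n, rfl⟩ := hy
      rw [← Module.End.mul_apply, pow_mul_comm, Module.End.mul_apply, hfkv]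
    | zero => simp
    | add y z _ _ hy hz => rw [map_add, hy, hz]
    | smul c y _ hy => rw [map_smul, hy]
  set g : W →ₗ[ℚ] W := f.restrict hWf with hg
  have hgk : g ^ k = 1 := by
    ext x
    rw [hg, Module.End.pow_restrict, Module.End.one_apply, LinearMap.restrict_coe_apply]
    exact hfk x.1 x.2
  have hWrank : Module.finrank ℚ (↥W) ≤ h := hrank ▸ Submodule.finrank_le W
  have hgν : g ^ ν = 1 := end_pow_eq_one hWrank g hk hgk
  have hfνv : (f ^ ν) v = v := by
    have h1 : (g ^ ν) ⟨v, hvW⟩ = ⟨v, hvW⟩ := by rw [hgν]; rfl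
    rw [hg, Module.End.pow_restrict] at h1
    have h2 := congrArg Subtype.val h1
    simpa [LinearMap.restrict_apply] using h2
  have htens : (1 : ℚ) ⊗ₜ[ℤ] ((ν • t) a) = (1 : ℚ) ⊗ₜ[ℤ] a := by
    rw [← key ν a, hfνv]
  -- injectivity of a ↦ 1 ⊗ a using torsion-freeness
  let j : A →ₗ[ℤ] ℚ ⊗[ℤ] A := TensorProduct.mk ℤ ℚ A 1
  haveI : IsLocalizedModule (nonZeroDivisors ℤ) j :=
    (isLocalizedModule_iff_isBaseChange (nonZeroDivisors ℤ) ℚ j).2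
      (TensorProduct.isBaseChange ℤ A ℚ)
  have hdiff : j ((ν • t) a - a) = 0 := by
    have : j ((ν • t) a - a) = (1 : ℚ) ⊗ₜ[ℤ] ((ν • t) a) - (1 : ℚ) ⊗ₜ[ℤ] a := by
      exact TensorProduct.tmul_sub (1 : ℚ) _ _
    rw [this, htens, sub_self]
  obtain ⟨s, hs⟩ := (IsLocalizedModule.eq_zero_iff (nonZeroDivisors ℤ) j).1 hdiff
  have hs0 : (s : ℤ) ≠ 0 := nonZeroDivisors.coe_ne_zero s
  have hzero : (ν • t) a - a = 0 := by
    have hsmul : (s : ℤ) • ((ν • t) a - a) = 0 := hs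
    exact (smul_eq_zero.1 hsmul).resolve_left hs0
  exact sub_eq_zero.1 hzero
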